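/- Let a, b, n be nonnegative integers with a + b < n/2, and let S = { i : 0 ≤ i ≤ n and C(i,a)·C(n-i,b) is odd }. Then |S| ≠ 1. -/

import Mathlib

open Finset

private def Kc (n a b : ℕ) : ℕ :=
  ((Finset.range (n + 1)).filter
    (fun i => Nat.choose i a % 2 = 1 ∧ Nat.choose (n - i) b % 2 = 1)).card

private lemma lucas2 (i a : ℕ) :
    Nat.choose i a % 2 = Nat.choose (i % 2) (a % 2) * Nat.choose (i / 2) (a / 2) % 2 :=
  Choose.choose_modEq_choose_mod_mul_choose_div_nat (n := i) (k := a) (p := 2)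

private lemma odd_choose_even (j a : ℕ) :
    Nat.choose (2 * j) a % 2 = 1 ↔ a % 2 = 0 ∧ Nat.choose j (a / 2) % 2 = 1 := by
  have h := lucas2 (2 * j) a
  have e1 : 2 * j % 2 = 0 := by omega
  have e2 : 2 * j / 2 = j := by omega
  rw [e1, e2] at h
  rcases Nat.mod_two_eq_zero_or_one a with h2 | h2 <;> rw [h2] at h <;> simp at h <;> omega

private lemma odd_choose_odd (j a : ℕ) :
    Nat.choose (2 * j + 1) a % 2 = 1 ↔ Nat.choose j (a / 2) % 2 = 1 := by
  have h := lucas2 (2 * j + 1) a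
  have e1 : (2 * j + 1) % 2 = 1 := by omega
  have e2 : (2 * j + 1) / 2 = j := by omega
  rw [e1, e2] at h
  rcases Nat.mod_two_eq_zero_or_one a with h2 | h2 <;> rw [h2] at h <;> simp at h <;> omega

private lemma card_filter_shift (N T c : ℕ) (hc : c < 2) (P Q : ℕ → Prop)
    [DecidablePred P] [DecidablePred Q]
    (hpar : ∀ i, i < N → P i → i % 2 = c ∧ i / 2 < T)
    (hmem : ∀ j, j < T → 2 * j + c < N)
    (hiff : ∀ j, j < T → (P (2 * j + c) ↔ Q j)) :
    ((Finset.range N).filter P).card = ((Finset.range T).filter Q).card := by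
  apply Finset.card_nbij' (fun i => i / 2) (fun j => 2 * j + c)
  · intro i hi
    simp only [Finset.mem_coe, Finset.mem_filter, Finset.mem_range] at hi ⊢
    obtain ⟨h1, h2⟩ := hi
    obtain ⟨hp, hlt⟩ := hpar i h1 h2
    refine ⟨hlt, ?_⟩
    rw [← hiff _ hlt]
    have e : 2 * (i / 2) + c = i := by omega
    rwa [e]
  · intro j hj
    simp only [Finset.mem_coe, Finset.mem_filter, Finset.mem_range] at hj ⊢
    exact ⟨hmem j hj.1, (hiff j hj.1).mpr hj.2⟩
  · intro i hi
    simp only [Finset.mem_coe, Finset.mem_filter, Finset.mem_range] at hi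
    have := (hpar i hi.1 hi.2).1
    dsimp only
    omega
  · intro j hj
    dsimp only
    omega

private lemma Kc_odd (t a b : ℕ) :
    Kc (2 * t + 1) a b =
      (if a % 2 = 0 then Kc t (a / 2) (b / 2) else 0) +
      (if b % 2 = 0 then Kc t (a / 2) (b / 2) else 0) := by
  classical
  unfold Kc
  have hsplit := Finset.card_filter_add_card_filter_not
    (s := (Finset.range (2 * t + 1 + 1)).filter
      (fun i => Nat.choose i a % 2 = 1 ∧ Nat.choose (2 * t + 1 - i) b % 2 = 1))
    (fun i => i % 2 = 0)
  rw [Finset.filter_filter, Finset.filter_filter] at hsplit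
  have heven : ((Finset.range (2 * t + 1 + 1)).filter
      (fun i => (Nat.choose i a % 2 = 1 ∧ Nat.choose (2 * t + 1 - i) b % 2 = 1)
        ∧ i % 2 = 0)).card
      = if a % 2 = 0 then
          ((Finset.range (t + 1)).filter
            (fun j => Nat.choose j (a / 2) % 2 = 1 ∧
              Nat.choose (t - j) (b / 2) % 2 = 1)).card else 0 := by
    by_cases ha : a % 2 = 0
    · rw [if_pos ha]
      apply card_filter_shift _ _ 0 (by norm_num)
      · intro i hi hPi
        exact ⟨hPi.2, by omega⟩
      · intro j hj; omega
      · intro j hj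
        have e0 : 2 * j + 0 = 2 * j := by omega
        have e1 : 2 * t + 1 - 2 * j = 2 * (t - j) + 1 := by omega
        rw [e0, e1, odd_choose_even, odd_choose_odd]
        constructor
        · rintro ⟨⟨⟨-, h1⟩, h2⟩, -⟩; exact ⟨h1, h2⟩
        · rintro ⟨h1, h2⟩; exact ⟨⟨⟨ha, h1⟩, h2⟩, by omega⟩
    · rw [if_neg ha]
      rw [Finset.card_eq_zero, Finset.filter_eq_empty_iff]
      rintro i - ⟨⟨h1, -⟩, hp⟩
      have e : i = 2 * (i / 2) := by omega
      rw [e, odd_choose_even] at h1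
      exact ha h1.1
  have hodd : ((Finset.range (2 * t + 1 + 1)).filter
      (fun i => (Nat.choose i a % 2 = 1 ∧ Nat.choose (2 * t + 1 - i) b % 2 = 1)
        ∧ ¬ i % 2 = 0)).card
      = if b % 2 = 0 then
          ((Finset.range (t + 1)).filter
            (fun j => Nat.choose j (a / 2) % 2 = 1 ∧
              Nat.choose (t - j) (b / 2) % 2 = 1)).card else 0 := by
    by_cases hb : b % 2 = 0
    · rw [if_pos hb]
      apply card_filter_shift _ _ 1 (by norm_num)
      · intro i hi hPi
        exact ⟨by omega, by omega⟩
      · intro j hj; omega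
      · intro j hj
        have e1 : 2 * t + 1 - (2 * j + 1) = 2 * (t - j) := by omega
        rw [e1, odd_choose_even, odd_choose_odd]
        constructor
        · rintro ⟨⟨h1, ⟨-, h2⟩⟩, -⟩; exact ⟨h1, h2⟩
        · rintro ⟨h1, h2⟩; exact ⟨⟨h1, ⟨hb, h2⟩⟩, by omega⟩
    · rw [if_neg hb]
      rw [Finset.card_eq_zero, Finset.filter_eq_empty_iff]
      rintro i hi ⟨⟨-, h2⟩, hp⟩
      simp only [Finset.mem_range] at hi
      have e : 2 * t + 1 - i = 2 * ((2 * t + 1 - i) / 2) := by omega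
      rw [e, odd_choose_even] at h2
      exact hb h2.1
  rw [heven, hodd] at hsplit
  omega

private lemma Kc_even (t a b : ℕ) :
    Kc (2 * t + 2) a b =
      (if a % 2 = 0 ∧ b % 2 = 0 then Kc (t + 1) (a / 2) (b / 2) else 0) +
      Kc t (a / 2) (b / 2) := by
  classical
  unfold Kc
  have hsplit := Finset.card_filter_add_card_filter_not
    (s := (Finset.range (2 * t + 2 + 1)).filter
      (fun i => Nat.choose i a % 2 = 1 ∧ Nat.choose (2 * t + 2 - i) b % 2 = 1))
    (fun i => i % 2 = 0)
  rw [Finset.filter_filter, Finset.filter_filter] at hsplit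
  have heven : ((Finset.range (2 * t + 2 + 1)).filter
      (fun i => (Nat.choose i a % 2 = 1 ∧ Nat.choose (2 * t + 2 - i) b % 2 = 1)
        ∧ i % 2 = 0)).card
      = if a % 2 = 0 ∧ b % 2 = 0 then
          ((Finset.range (t + 1 + 1)).filter
            (fun j => Nat.choose j (a / 2) % 2 = 1 ∧
              Nat.choose (t + 1 - j) (b / 2) % 2 = 1)).card else 0 := by
    by_cases hab : a % 2 = 0 ∧ b % 2 = 0
    · rw [if_pos hab]
      apply card_filter_shift _ _ 0 (by norm_num)
      · intro i hi hPi
        exact ⟨hPi.2, by omega⟩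
      · intro j hj; omega
      · intro j hj
        have e0 : 2 * j + 0 = 2 * j := by omega
        have e1 : 2 * t + 2 - 2 * j = 2 * (t + 1 - j) := by omega
        rw [e0, e1, odd_choose_even, odd_choose_even]
        constructor
        · rintro ⟨⟨⟨-, h1⟩, ⟨-, h2⟩⟩, -⟩; exact ⟨h1, h2⟩
        · rintro ⟨h1, h2⟩; exact ⟨⟨⟨hab.1, h1⟩, ⟨hab.2, h2⟩⟩, by omega⟩
    · rw [if_neg hab]
      rw [Finset.card_eq_zero, Finset.filter_eq_empty_iff]
      rintro i hi ⟨⟨h1, h2⟩, hp⟩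
      simp only [Finset.mem_range] at hi
      have e : i = 2 * (i / 2) := by omega
      rw [e, odd_choose_even] at h1
      have e2 : 2 * t + 2 - i = 2 * ((2 * t + 2 - i) / 2) := by omega
      rw [e2, odd_choose_even] at h2
      exact hab ⟨h1.1, h2.1⟩
  have hodd : ((Finset.range (2 * t + 2 + 1)).filter
      (fun i => (Nat.choose i a % 2 = 1 ∧ Nat.choose (2 * t + 2 - i) b % 2 = 1)
        ∧ ¬ i % 2 = 0)).card
      = ((Finset.range (t + 1)).filter
          (fun j => Nat.choose j (a / 2) % 2 = 1 ∧
            Nat.choose (t - j) (b / 2) % 2 = 1)).card := by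
    apply card_filter_shift _ _ 1 (by norm_num)
    · intro i hi hPi
      exact ⟨by omega, by omega⟩
    · intro j hj; omega
    · intro j hj
      have e1 : 2 * t + 2 - (2 * j + 1) = 2 * (t - j) + 1 := by omega
      rw [e1, odd_choose_odd, odd_choose_odd]
      constructor
      · rintro ⟨⟨h1, h2⟩, -⟩; exact ⟨h1, h2⟩
      · rintro ⟨h1, h2⟩; exact ⟨⟨h1, h2⟩, by omega⟩
  rw [heven, hodd] at hsplit
  omega

private lemma keyD : ∀ n a b : ℕ, 2 * (a + b) ≤ n →
    (Kc n a b = 1 → n = 2 * (a + b)) ∧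
    (Kc n a b = 0 → 1 ≤ n → Kc (n - 1) a b ≠ 1) := by
  intro n
  induction n using Nat.strong_induction_on with
  | _ n IH =>
  intro a b hab
  rcases Nat.even_or_odd' n with ⟨t, ht | ht⟩
  · -- n = 2 * t
    subst ht
    rcases Nat.eq_zero_or_pos t with rfl | hts
    · exact ⟨fun _ => by omega, fun _ h => by omega⟩
    · obtain ⟨s, rfl⟩ : ∃ s, t = s + 1 := ⟨t - 1, by omega⟩
      have e : 2 * (s + 1) = 2 * s + 2 := by omega
      rw [e] at hab ⊢
      have hrec := Kc_even s a b
      have hIH1 := IH (s + 1) (by omega) (a / 2) (b / 2) (by omega)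
      constructor
      · intro hone
        by_cases hab0 : a % 2 = 0 ∧ b % 2 = 0
        · rw [if_pos hab0] at hrec
          rcases (by omega :
              (Kc (s + 1) (a / 2) (b / 2) = 1 ∧ Kc s (a / 2) (b / 2) = 0) ∨
              (Kc (s + 1) (a / 2) (b / 2) = 0 ∧ Kc s (a / 2) (b / 2) = 1)) with
            ⟨c1, c2⟩ | ⟨c1, c2⟩
          · have := hIH1.1 c1
            omega
          · have h2 := hIH1.2 c1 (by omega)
            simp only [Nat.add_sub_cancel] at h2
            exact absurd c2 h2
        · rw [if_neg hab0] at hrec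
          have hIH2 := IH s (by omega) (a / 2) (b / 2) (by omega)
          have := hIH2.1 (by omega)
          omega
      · intro h0 _
        have hrec2 := Kc_odd s a b
        have e2 : 2 * s + 2 - 1 = 2 * s + 1 := by omega
        rw [e2, hrec2]
        split_ifs at hrec ⊢ <;> omega
  · -- n = 2 * t + 1
    subst ht
    rcases Nat.eq_zero_or_pos t with rfl | hts
    · have ha : a = 0 := by omega
      have hb : b = 0 := by omega
      subst ha; subst hb
      have hv : Kc (2 * 0 + 1) 0 0 = 2 := by decide
      exact ⟨fun h => by omega, fun h _ => by omega⟩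
    · have hrec := Kc_odd t a b
      have hIH1 := IH t (by omega) (a / 2) (b / 2) (by omega)
      constructor
      · intro hone
        split_ifs at hrec with h1 h2 h2
        · omega
        · have := hIH1.1 (by omega)
          omega
        · have := hIH1.1 (by omega)
          omega
        · omega
      · intro h0 _
        obtain ⟨s, rfl⟩ : ∃ s, t = s + 1 := ⟨t - 1, by omega⟩
        have e : 2 * (s + 1) + 1 - 1 = 2 * s + 2 := by omega
        rw [e, Kc_even s a b]
        have e2 : s + 1 - 1 = s := by omega
        by_cases hab0 : a % 2 = 1 ∧ b % 2 = 1
        · -- both odd: the even recursion's first term vanishes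
          rw [if_neg (by omega)]
          have hIH3 := IH s (by omega) (a / 2) (b / 2) (by omega)
          have := hIH3.1
          omega
        · -- at least one even: Kc (s+1) (a/2) (b/2) = 0 from h0
          have hX : Kc (s + 1) (a / 2) (b / 2) = 0 := by
            split_ifs at hrec <;> omega
          have h2 := hIH1.2 hX (by omega)
          simp only [Nat.add_sub_cancel] at h2
          split_ifs <;> omega

theorem odd_binom_product_count_ne_one (a b n : ℕ) (h : 2 * (a + b) < n) :
    ((Finset.range (n + 1)).filter
        (fun i => Odd (Nat.choose i a * Nat.choose (n - i) b))).card ≠ 1 := by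
  have hKc : ((Finset.range (n + 1)).filter
      (fun i => Odd (Nat.choose i a * Nat.choose (n - i) b))).card = Kc n a b := by
    unfold Kc
    congr 1
    apply Finset.filter_congr
    intro i _
    rw [Nat.odd_mul, Nat.odd_iff, Nat.odd_iff]
  intro hone
  rw [hKc] at hone
  have := (keyD n a b (by omega)).1 hone
  omega
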